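/- Let 𝒫 be a partial clustering, let (P_1,…,P_k) be an optimal extension of 𝒫 with associated centers (c'_i), and set R_j = P_j ∩ R for every j. Fix i ∈ [k] with |I_i| ≥ Δ + 1 and j ∈ [k]∖{i} with I_j = ∅. Let J'_j ⊆ I_i be obtained from I_i by removing Δ coordinates with the largest values of d^{r}(u_i, c'_j); that is, |I_i − J'_j| = Δ and d^{r}(u_i, c'_j) ≥ d^{s}(u_i, c'_j) for every r ∈ I_i − J'_j and every s ∈ J'_j. Set d^j = d^{J'_j}(u_i, c'_j). If d^j > 0, then every x ∈ R_j with Dom(x) ⊆ I_i satisfies d(x, u_i) > d^j/4. -/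

import Mathlib

open Finset

namespace KMD

/-- A point in `ℍ^d`: each coordinate is either a real number or missing (`none`). -/
abbrev HPt (d : ℕ) := Fin d → Option ℝ

variable {d : ℕ}

/-- The domain of a point: the set of coordinates where it is specified. -/
noncomputable def Dom (x : HPt d) : Finset (Fin d) := Finset.univ.filter fun i => x i ≠ none

/-- The number of missing coordinates of a point. -/
noncomputable def numMissing (x : HPt d) : ℕ := (Finset.univ.filter fun i => x i = none).card

/-- A `Δ`-point: at most `Δ` coordinates are missing. -/
def IsDeltaPt (Δ : ℕ) (x : HPt d) : Prop := numMissing x ≤ Δ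

/-- `(a - b)^2`, with the convention that it is `0` when either entry is missing. -/
def coordSq : Option ℝ → Option ℝ → ℝ
  | some a, some b => (a - b) ^ 2
  | _, _ => 0

/-- `d^I(x,y)`. -/
noncomputable def dI (I : Finset (Fin d)) (x y : HPt d) : ℝ :=
  Real.sqrt (∑ i ∈ I, coordSq (x i) (y i))

/-- `d(x,y) = d^{[d]}(x,y)`. -/
noncomputable def dH (x y : HPt d) : ℝ := dI Finset.univ x y

/-- `PD(S, I)`: points of `S` partially defined on `I`. -/
noncomputable def PD (S : Finset (HPt d)) (I : Finset (Fin d)) : Finset (HPt d) :=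
  S.filter fun x => (Dom x ∩ I).Nonempty

/-- `FD(S, I)`: points of `S` fully defined on `I`. -/
noncomputable def FD (S : Finset (HPt d)) (I : Finset (Fin d)) : Finset (HPt d) :=
  S.filter fun x => Dom x ⊆ I

/-- The mean `c^I(P)` of `P` on the coordinates of `I` (unspecified outside `I`). -/
noncomputable def cI (I : Finset (Fin d)) (P : Finset (HPt d)) : HPt d := fun i =>
  if i ∈ I ∧ (PD P {i}).Nonempty then
    some ((∑ x ∈ PD P {i}, (x i).getD 0) / (PD P {i}).card)
  else none

/-- `c(P) = c^{[d]}(P)`. -/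
noncomputable def cP (P : Finset (HPt d)) : HPt d := cI Finset.univ P

/-- `f^I_2(X, y) = Σ_{x ∈ X} d^I(x,y)^2`. -/
noncomputable def f2I (I : Finset (Fin d)) (X : Finset (HPt d)) (y : HPt d) : ℝ :=
  ∑ x ∈ X, dI I x y ^ 2

/-- `f_2 = f^{[d]}_2`. -/
noncomputable def f2 (X : Finset (HPt d)) (y : HPt d) : ℝ := f2I Finset.univ X y

/-- A partial clustering of the instance `P` of `Δ`-points, with `k` clusters. -/
structure PartialClustering (d Δ k : ℕ) (P : Finset (HPt d)) where
  n : Fin k → ℕ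
  H : Fin k → Finset (HPt d)
  I : Fin k → Finset (Fin d)
  u : Fin k → HPt d
  H_sub : ∀ i, H i ⊆ P
  n_le : ∀ i, n i ≤ Δ + 1
  dom_u : ∀ i, Dom (u i) = I i
  I_card : ∀ i, 0 < n i → d - Δ + (n i - 1) ≤ (I i).card
  I_empty : ∀ i, n i = 0 → I i = ∅
  H_empty : ∀ i, n i = 0 → H i = ∅

variable {Δ k : ℕ} {P : Finset (HPt d)}

/-- `R = P − ∪_i H_i`: the points not yet assigned to a cluster. -/
noncomputable def Rset (pc : PartialClustering d Δ k P) : Finset (HPt d) :=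
  P \ Finset.univ.biUnion pc.H

/-- An extension of a partial clustering: a partition `(Q i)` of `P` with `H i ⊆ Q i`. -/
def IsExtension (pc : PartialClustering d Δ k P) (Q : Fin k → Finset (HPt d)) : Prop :=
  (∀ i, pc.H i ⊆ Q i) ∧ (∀ i, Q i ⊆ P) ∧
    (∀ i j, i ≠ j → Disjoint (Q i) (Q j)) ∧ ∀ x ∈ P, ∃ i, x ∈ Q i

/-- The centers associated with an extension: `c'_i` agrees with `u i` on `I i`
and with the mean of `Q i` outside `I i`. -/
noncomputable def centers (pc : PartialClustering d Δ k P)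
    (Q : Fin k → Finset (HPt d)) (i : Fin k) : HPt d :=
  fun r => if r ∈ pc.I i then pc.u i r else cP (Q i) r

/-- The value of an extension. -/
noncomputable def extVal (pc : PartialClustering d Δ k P)
    (Q : Fin k → Finset (HPt d)) : ℝ :=
  ∑ i, f2 (Q i) (centers pc Q i)

/-- `OPT(pc)`: the minimum value over all extensions of `pc`. -/
noncomputable def OPT (pc : PartialClustering d Δ k P) : ℝ :=
  sInf (extVal pc '' {Q | IsExtension pc Q})

/-- An optimal extension. -/
def IsOptimalExtension (pc : PartialClustering d Δ k P)
    (Q : Fin k → Finset (HPt d)) : Prop :=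
  IsExtension pc Q ∧ ∀ Q', IsExtension pc Q' → extVal pc Q ≤ extVal pc Q'

/-- A safe extension. -/
def IsSafe (pc : PartialClustering d Δ k P) (Q : Fin k → Finset (HPt d)) : Prop :=
  ∀ x ∈ Rset pc, ∀ i j : Fin k, Dom x ⊆ pc.I i → Dom x ⊆ pc.I j → x ∈ Q i →
    dH x (centers pc Q i) ≤ dH x (centers pc Q j)

/-- `Z` is a `t`-useless set of coordinates for the pair `(i,j)` and extension `Q`.
For pairs with `I i = ∅` or `I j ≠ ∅` it is by definition the empty set. -/
def IsUseless (pc : PartialClustering d Δ k P) (Q : Fin k → Finset (HPt d))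
    (t : ℝ) (i j : Fin k) (Z : Finset (Fin d)) : Prop :=
  Z ⊆ pc.I i ∧
  (((pc.I i).Nonempty ∧ pc.I j = ∅) →
    (Z = ∅ ∨ d - Δ ≤ Z.card) ∧
    f2I Z (Q j ∩ Rset pc) (pc.u i) - f2I Z (Q j ∩ Rset pc) (centers pc Q j)
      ≤ t * OPT pc) ∧
  (¬ ((pc.I i).Nonempty ∧ pc.I j = ∅) → Z = ∅)

/-- `Z` is compatible with the extension `Q` (for the pair `(i,j)`). -/
def Compatible (pc : PartialClustering d Δ k P) (Q : Fin k → Finset (HPt d))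
    (i j : Fin k) (Z : Finset (Fin d)) : Prop :=
  (∀ x ∈ Q j, ¬ Dom x ⊆ pc.I j → ¬ Dom x ⊆ Z) ∧
  (∀ x ∈ Q j, Dom x ⊆ pc.I i → ¬ dH x (pc.u i) < dH x (centers pc Q j) / 2)

open scoped Classical in
/-- The elements of `FD(S, I)` at distance at most `ρ` from `u`. -/
noncomputable def ballFD (S : Finset (HPt d)) (I : Finset (Fin d))
    (u : HPt d) (ρ : ℝ) : Finset (HPt d) :=
  (FD S I).filter fun x => dH x u ≤ ρ



section AuxStmt5

variable {d : ℕ}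

lemma coordSq_nonneg (a b : Option ℝ) : 0 ≤ coordSq a b := by
  cases a <;> cases b <;> simp [coordSq] <;> positivity

lemma coordSq_none_left (b : Option ℝ) : coordSq none b = 0 := by
  cases b <;> rfl

lemma coordSq_none_right (a : Option ℝ) : coordSq a none = 0 := by
  cases a <;> rfl

lemma coordSq_comm (a b : Option ℝ) : coordSq a b = coordSq b a := by
  cases a <;> cases b <;> simp [coordSq]; ring

lemma dI_nonneg (I : Finset (Fin d)) (x y : HPt d) : 0 ≤ dI I x y := Real.sqrt_nonneg _

lemma dI_sq (I : Finset (Fin d)) (x y : HPt d) :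
    dI I x y ^ 2 = ∑ r ∈ I, coordSq (x r) (y r) :=
  Real.sq_sqrt (Finset.sum_nonneg fun r _ => coordSq_nonneg _ _)

lemma dI_mono {I I' : Finset (Fin d)} (h : I ⊆ I') (x y : HPt d) : dI I x y ≤ dI I' x y :=
  Real.sqrt_le_sqrt (Finset.sum_le_sum_of_subset_of_nonneg h fun r _ _ => coordSq_nonneg _ _)

lemma mem_Dom_iff {x : HPt d} {r : Fin d} : r ∈ Dom x ↔ x r ≠ none := by
  simp [Dom]

lemma sqrt_sum_sq_add {ι : Type*} (s : Finset ι) (f g : ι → ℝ) :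
    Real.sqrt (∑ r ∈ s, (f r + g r) ^ 2) ≤
      Real.sqrt (∑ r ∈ s, f r ^ 2) + Real.sqrt (∑ r ∈ s, g r ^ 2) := by
  have hcs := Real.sum_mul_le_sqrt_mul_sqrt s f g
  have hf : Real.sqrt (∑ r ∈ s, f r ^ 2) ^ 2 = ∑ r ∈ s, f r ^ 2 :=
    Real.sq_sqrt (by positivity)
  have hg : Real.sqrt (∑ r ∈ s, g r ^ 2) ^ 2 = ∑ r ∈ s, g r ^ 2 :=
    Real.sq_sqrt (by positivity)
  have hexp : ∑ r ∈ s, (f r + g r) ^ 2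
      = ∑ r ∈ s, f r ^ 2 + 2 * (∑ r ∈ s, f r * g r) + ∑ r ∈ s, g r ^ 2 := by
    rw [Finset.mul_sum, ← Finset.sum_add_distrib, ← Finset.sum_add_distrib]
    exact Finset.sum_congr rfl fun r _ => by ring
  have h1 : ∑ r ∈ s, (f r + g r) ^ 2
      ≤ (Real.sqrt (∑ r ∈ s, f r ^ 2) + Real.sqrt (∑ r ∈ s, g r ^ 2)) ^ 2 := by
    nlinarith [hcs, hf, hg, hexp]
  calc Real.sqrt (∑ r ∈ s, (f r + g r) ^ 2)
      ≤ Real.sqrt ((Real.sqrt (∑ r ∈ s, f r ^ 2) + Real.sqrt (∑ r ∈ s, g r ^ 2)) ^ 2) :=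
        Real.sqrt_le_sqrt h1
    _ = _ := Real.sqrt_sq (by positivity)

lemma mean_min {ι : Type*} (T : Finset ι) (g : ι → ℝ) (b : ℝ) (hT : T.Nonempty) :
    ∑ y ∈ T, (g y - (∑ z ∈ T, g z) / T.card) ^ 2 ≤ ∑ y ∈ T, (g y - b) ^ 2 := by
  have hn : (0 : ℝ) < T.card := by
    exact_mod_cast Finset.card_pos.mpr hT
  set n : ℝ := (T.card : ℝ) with hn'
  set s : ℝ := ∑ z ∈ T, g z with hs
  have expand : ∀ a : ℝ, ∑ y ∈ T, (g y - a) ^ 2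
      = ∑ y ∈ T, (g y) ^ 2 - 2 * a * s + n * a ^ 2 := by
    intro a
    have : ∀ y ∈ T, (g y - a) ^ 2 = (g y) ^ 2 - (2 * a) * g y + a ^ 2 := fun y _ => by ring
    rw [Finset.sum_congr rfl this, Finset.sum_add_distrib, Finset.sum_sub_distrib,
      ← Finset.mul_sum, Finset.sum_const, nsmul_eq_mul]
  rw [expand, expand]
  have e3 : s ^ 2 / n * n = s ^ 2 := by field_simp
  have e1 : n * (s / n) ^ 2 = s ^ 2 / n := by field_simp
  have e2 : 2 * (s / n) * s = 2 * (s ^ 2 / n) := by ring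
  rw [e1, e2]
  nlinarith [sq_nonneg (n * b - s), hn, e3]

lemma mem_PD_singleton {S : Finset (HPt d)} {r : Fin d} {y : HPt d} :
    y ∈ PD S {r} ↔ y ∈ S ∧ y r ≠ none := by
  simp [PD, Dom, Finset.Nonempty, Finset.mem_inter]

lemma f2_cP_le (S : Finset (HPt d)) (c : HPt d)
    (hc : ∀ r, c r = none → ∀ y ∈ S, y r = none) :
    f2 S (cP S) ≤ f2 S c := by
  classical
  unfold f2 f2I
  simp_rw [dI_sq]
  rw [Finset.sum_comm]
  rw [show ∑ x ∈ S, ∑ r : Fin d, coordSq (x r) (c r)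
      = ∑ r : Fin d, ∑ x ∈ S, coordSq (x r) (c r) from Finset.sum_comm]
  apply Finset.sum_le_sum
  intro r _
  by_cases hcr : c r = none
  · have hz : ∀ y ∈ S, y r = none := hc r hcr
    have l0 : ∑ x ∈ S, coordSq (x r) (cP S r) = 0 :=
      Finset.sum_eq_zero fun y hy => by rw [hz y hy, coordSq_none_left]
    have r0 : ∑ x ∈ S, coordSq (x r) (c r) = 0 :=
      Finset.sum_eq_zero fun y hy => by rw [hz y hy, coordSq_none_left]
    rw [l0, r0]
  · obtain ⟨b, hb⟩ : ∃ b, c r = some b := Option.ne_none_iff_exists'.mp hcr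
    by_cases hPD : (PD S {r}).Nonempty
    · have hcPr : cP S r = some ((∑ x ∈ PD S {r}, (x r).getD 0) / (PD S {r}).card) := by
        simp [cP, cI, hPD]
      have reduce : ∀ a : ℝ, ∑ y ∈ S, coordSq (y r) (some a)
          = ∑ y ∈ PD S {r}, ((y r).getD 0 - a) ^ 2 := by
        intro a
        have hsub : PD S {r} ⊆ S := fun y hy => (mem_PD_singleton.mp hy).1
        rw [← Finset.sum_subset hsub (fun y hy hny => ?_)]
        · apply Finset.sum_congr rfl
          intro y hy
          obtain ⟨hyS, hyr⟩ := mem_PD_singleton.mp hy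
          obtain ⟨v, hv⟩ : ∃ v, y r = some v := Option.ne_none_iff_exists'.mp hyr
          rw [hv]; simp [coordSq]
        · have : y r = none := by
            by_contra h
            exact hny (mem_PD_singleton.mpr ⟨hy, h⟩)
          rw [this, coordSq_none_left]
      rw [hb, hcPr, reduce, reduce]
      exact mean_min _ _ _ hPD
    · have hz : ∀ y ∈ S, y r = none := by
        intro y hy
        by_contra h
        exact hPD ⟨y, mem_PD_singleton.mpr ⟨hy, h⟩⟩
      have l0 : ∑ x ∈ S, coordSq (x r) (cP S r) = 0 :=
        Finset.sum_eq_zero fun y hy => by rw [hz y hy, coordSq_none_left]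
      have r0 : ∑ x ∈ S, coordSq (x r) (c r) = 0 :=
        Finset.sum_eq_zero fun y hy => by rw [hz y hy, coordSq_none_left]
      rw [l0, r0]

lemma sum_le_sum_of_card_le {ι : Type*} [DecidableEq ι] {A B : Finset ι} {w : ι → ℝ}
    (hw : ∀ r, 0 ≤ w r) (hcard : A.card ≤ B.card)
    (hle : ∀ a ∈ A, ∀ b ∈ B, w a ≤ w b) : ∑ r ∈ A, w r ≤ ∑ r ∈ B, w r := by
  rcases A.eq_empty_or_nonempty with rfl | hA
  · exact Finset.sum_nonneg fun r _ => hw r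
  · have hB : B.Nonempty :=
      Finset.card_pos.mp (lt_of_lt_of_le (Finset.card_pos.mpr hA) hcard)
    obtain ⟨m, hm, hmin⟩ := B.exists_min_image w hB
    have h1 : ∑ r ∈ A, w r ≤ A.card • w m :=
      Finset.sum_le_card_nsmul A w (w m) fun a ha => hle a ha m hm
    have h2 : B.card • w m ≤ ∑ r ∈ B, w r :=
      Finset.card_nsmul_le_sum B w (w m) fun b hb => hmin b hb
    have h3 : (A.card : ℝ) * w m ≤ (B.card : ℝ) * w m :=
      mul_le_mul_of_nonneg_right (Nat.cast_le.mpr hcard) (hw m)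
    rw [nsmul_eq_mul] at h1 h2
    linarith

end AuxStmt5

/-- Lemma 4: points of `R_j` fully defined on `I_i` are far from `u_i`. -/
theorem stmt_5 {d Δ k : ℕ} (hd : 1 ≤ d) (hΔ : Δ < d) (hk : 1 ≤ k)
    {P : Finset (HPt d)} (hP : ∀ y ∈ P, IsDeltaPt Δ y ∧ (Dom y).Nonempty)
    (pc : PartialClustering d Δ k P)
    (Q : Fin k → Finset (HPt d)) (hQ : IsOptimalExtension pc Q)
    (i j : Fin k) (hij : j ≠ i) (hIi : Δ + 1 ≤ (pc.I i).card) (hIj : pc.I j = ∅)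
    (J' : Finset (Fin d)) (hJ'sub : J' ⊆ pc.I i) (hJ'card : (pc.I i \ J').card = Δ)
    (hJ'max : ∀ r ∈ pc.I i \ J', ∀ s ∈ J',
      dI {s} (pc.u i) (centers pc Q j) ≤ dI {r} (pc.u i) (centers pc Q j))
    (dj : ℝ) (hdj : dj = dI J' (pc.u i) (centers pc Q j)) (hpos : 0 < dj) :
    ∀ x ∈ Q j ∩ Rset pc, Dom x ⊆ pc.I i → dj / 4 < dH x (pc.u i) := by
  classical
  intro x hx hDom
  rw [Finset.mem_inter] at hx
  obtain ⟨hxQj, hxR⟩ := hx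
  obtain ⟨hext, hopt⟩ := hQ
  obtain ⟨hH, hQP, hdisj, hcover⟩ := hext
  have hxP : x ∈ P := hQP j hxQj
  have hxQi : x ∉ Q i := fun h => Finset.disjoint_left.mp (hdisj j i hij) hxQj h
  have hxH : ∀ l, x ∉ pc.H l := by
    intro l hl
    exact (Finset.mem_sdiff.mp hxR).2 (Finset.mem_biUnion.mpr ⟨l, Finset.mem_univ l, hl⟩)
  set ci := centers pc Q i with hci
  set cj := centers pc Q j with hcj
  have hDomu : Dom (pc.u i) = pc.I i := pc.dom_u i
  have hxnone : ∀ r, r ∉ pc.I i → x r = none := by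
    intro r hr
    by_contra h
    exact hr (hDom (mem_Dom_iff.mpr h))
  have hunone : ∀ r, r ∈ pc.I i → pc.u i r ≠ none := by
    intro r hr
    rw [← hDomu] at hr
    exact mem_Dom_iff.mp hr
  -- Step 1: dH x ci = dH x (pc.u i)
  have step1 : dH x ci = dH x (pc.u i) := by
    unfold dH dI
    congr 1
    apply Finset.sum_congr rfl
    intro r _
    by_cases hr : r ∈ pc.I i
    · simp [hci, centers, hr]
    · rw [hxnone r hr, coordSq_none_left, coordSq_none_left]
  -- Step 2: exchange argument gives dH x cj ≤ dH x ci
  set Q' : Fin k → Finset (HPt d) :=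
    fun l => if l = j then (Q j).erase x else if l = i then insert x (Q i) else Q l with hQ'
  have hij' : i ≠ j := Ne.symm hij
  have hQ'i : Q' i = insert x (Q i) := by simp [hQ', hij']
  have hQ'j : Q' j = (Q j).erase x := by simp [hQ']
  have hQ'other : ∀ l, l ≠ i → l ≠ j → Q' l = Q l := by
    intro l h1 h2; simp [hQ', h1, h2]
  have hmem : ∀ l y, y ∈ Q' l ↔ (y = x ∧ l = i) ∨ (y ≠ x ∧ y ∈ Q l) := by
    intro l y
    by_cases hl : l = j
    · subst hl
      rw [hQ'j, Finset.mem_erase]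
      constructor
      · rintro ⟨hne, hm⟩; exact Or.inr ⟨hne, hm⟩
      · rintro (⟨rfl, h2⟩ | ⟨hne, hm⟩)
        · exact absurd h2 hij
        · exact ⟨hne, hm⟩
    · by_cases hl2 : l = i
      · subst hl2
        rw [hQ'i, Finset.mem_insert]
        constructor
        · rintro (rfl | hm)
          · exact Or.inl ⟨rfl, rfl⟩
          · by_cases hyx : y = x
            · exact Or.inl ⟨hyx, rfl⟩
            · exact Or.inr ⟨hyx, hm⟩
        · rintro (⟨rfl, _⟩ | ⟨_, hm⟩)
          · exact Or.inl rfl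
          · exact Or.inr hm
      · rw [hQ'other l hl2 hl]
        constructor
        · intro hm
          by_cases hyx : y = x
          · subst hyx
            exact absurd hxQj (Finset.disjoint_left.mp (hdisj l j hl) hm)
          · exact Or.inr ⟨hyx, hm⟩
        · rintro (⟨rfl, rfl⟩ | ⟨_, hm⟩)
          · exact absurd rfl hl2
          · exact hm
  have hext' : IsExtension pc Q' := by
    refine ⟨?_, ?_, ?_, ?_⟩
    · intro l
      by_cases hl : l = j
      · rw [hl, hQ'j]
        exact Finset.subset_erase.mpr ⟨hH j, hxH j⟩
      · by_cases hl2 : l = i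
        · rw [hl2, hQ'i]
          exact (hH i).trans (Finset.subset_insert _ _)
        · rw [hQ'other l hl2 hl]; exact hH l
    · intro l
      by_cases hl : l = j
      · rw [hl, hQ'j]; exact (Finset.erase_subset _ _).trans (hQP j)
      · by_cases hl2 : l = i
        · rw [hl2, hQ'i]; exact Finset.insert_subset hxP (hQP i)
        · rw [hQ'other l hl2 hl]; exact hQP l
    · intro a b hab
      rw [Finset.disjoint_left]
      intro y hya hyb
      rcases (hmem a y).mp hya with ⟨hyx, rfl⟩ | ⟨hne, hma⟩
      · rcases (hmem b y).mp hyb with ⟨_, rfl⟩ | ⟨hne, _⟩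
        · exact hab rfl
        · exact hne hyx
      · rcases (hmem b y).mp hyb with ⟨rfl, _⟩ | ⟨_, hmb⟩
        · exact hne rfl
        · exact Finset.disjoint_left.mp (hdisj a b hab) hma hmb
    · intro y hy
      by_cases hyx : y = x
      · exact ⟨i, (hmem i y).mpr (Or.inl ⟨hyx, rfl⟩)⟩
      · obtain ⟨l, hl⟩ := hcover y hy
        exact ⟨l, (hmem l y).mpr (Or.inr ⟨hyx, hl⟩)⟩
  -- centers are unchanged for cluster i
  have hPDins : ∀ r, r ∉ pc.I i → PD (insert x (Q i)) {r} = PD (Q i) {r} := by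
    intro r hr
    ext y
    rw [mem_PD_singleton, mem_PD_singleton, Finset.mem_insert]
    constructor
    · rintro ⟨rfl | hm, h2⟩
      · exact absurd (hxnone r hr) h2
      · exact ⟨hm, h2⟩
    · rintro ⟨hm, h2⟩; exact ⟨Or.inr hm, h2⟩
  have hcenters_i : centers pc Q' i = ci := by
    funext r
    rw [hci]
    unfold centers
    by_cases hr : r ∈ pc.I i
    · rw [if_pos hr, if_pos hr]
    · rw [if_neg hr, if_neg hr, hQ'i]
      unfold cP cI
      rw [hPDins r hr]
  have hcenters_other : ∀ l, l ≠ i → l ≠ j →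
      centers pc Q' l = centers pc Q l := by
    intro l h1 h2
    unfold centers
    rw [hQ'other l h1 h2]
  have hcenters_j : centers pc Q' j = cP (Q' j) := by
    funext r
    unfold centers
    rw [hIj, if_neg (Finset.notMem_empty r)]
  -- value comparison
  have hsplit : ∀ F : Fin k → ℝ,
      ∑ l, F l = F i + F j + ∑ l ∈ Finset.univ \ {i, j}, F l := by
    intro F
    rw [← Finset.sum_sdiff (Finset.subset_univ ({i, j} : Finset (Fin k))),
      Finset.sum_pair hij']
    ring
  have hopt' := hopt Q' hext'
  unfold extVal at hopt'
  rw [hsplit (fun l => f2 (Q' l) (centers pc Q' l)),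
    hsplit (fun l => f2 (Q l) (centers pc Q l))] at hopt'
  have htail : ∑ l ∈ Finset.univ \ {i, j}, f2 (Q' l) (centers pc Q' l)
      = ∑ l ∈ Finset.univ \ {i, j}, f2 (Q l) (centers pc Q l) := by
    apply Finset.sum_congr rfl
    intro l hl
    have hl' := Finset.mem_sdiff.mp hl
    have h1 : l ≠ i := fun h => hl'.2 (by simp [h])
    have h2 : l ≠ j := fun h => hl'.2 (by simp [h])
    rw [hQ'other l h1 h2, hcenters_other l h1 h2]
  rw [htail] at hopt'
  have hFi : f2 (Q' i) (centers pc Q' i) = f2 (Q i) ci + dH x ci ^ 2 := by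
    rw [hcenters_i, hQ'i]
    unfold f2 f2I dH
    rw [Finset.sum_insert hxQi]
    ring
  have hFj : f2 (Q' j) (centers pc Q' j) ≤ f2 (Q j) cj - dH x cj ^ 2 := by
    have hcj_none : ∀ r, cj r = none → ∀ y ∈ Q' j, y r = none := by
      intro r hr y hy
      have hyQ : y ∈ Q j := Finset.mem_of_mem_erase (hQ'j ▸ hy)
      have hr' : cP (Q j) r = none := by
        rw [hcj] at hr
        unfold centers at hr
        rw [hIj] at hr
        simpa using hr
      by_contra hyr
      have hPDne : (PD (Q j) {r}).Nonempty := ⟨y, mem_PD_singleton.mpr ⟨hyQ, hyr⟩⟩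
      rw [show cP (Q j) r = some ((∑ z ∈ PD (Q j) {r}, (z r).getD 0) / (PD (Q j) {r}).card)
        from by simp [cP, cI, hPDne]] at hr'
      exact Option.some_ne_none _ hr'
    have h1 : f2 (Q' j) (cP (Q' j)) ≤ f2 (Q' j) cj := f2_cP_le _ _ hcj_none
    have h2 : f2 (Q' j) cj = f2 (Q j) cj - dH x cj ^ 2 := by
      rw [hQ'j]
      unfold f2 f2I dH
      rw [← Finset.sum_erase_add (Q j) _ hxQj]
      ring
    rw [hcenters_j]
    linarith [h1, h2.le, h2.ge]
  have hsq : dH x cj ^ 2 ≤ dH x ci ^ 2 := by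
    linarith [hopt', hFi, hFj]
  have hle : dH x cj ≤ dH x ci := by
    have h1 : (0:ℝ) ≤ dH x cj := dI_nonneg _ _ _
    have h2 : (0:ℝ) ≤ dH x ci := dI_nonneg _ _ _
    nlinarith
  -- Step 3: geometry
  set w : Fin d → ℝ := fun r => coordSq (pc.u i r) (cj r) with hw
  have hwn : ∀ r, 0 ≤ w r := fun r => coordSq_nonneg _ _
  have hdj2 : dj ^ 2 = ∑ r ∈ J', w r := by rw [hdj, dI_sq]
  have hwcomp : ∀ r ∈ pc.I i \ J', ∀ s ∈ J', w s ≤ w r := by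
    intro r hr s hs
    have h1 : dI {s} (pc.u i) cj ^ 2 ≤ dI {r} (pc.u i) cj ^ 2 :=
      pow_le_pow_left₀ (dI_nonneg _ _ _) (hJ'max r hr s hs) 2
    rwa [dI_sq, dI_sq, Finset.sum_singleton, Finset.sum_singleton] at h1
  set M : Finset (Fin d) := pc.I i \ Dom x with hM
  have hMcard : M.card ≤ Δ := by
    have h1 : M ⊆ Finset.univ.filter (fun r => x r = none) := by
      intro r hr
      have hr' := Finset.mem_sdiff.mp hr
      refine Finset.mem_filter.mpr ⟨Finset.mem_univ r, ?_⟩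
      by_contra h
      exact hr'.2 (mem_Dom_iff.mpr h)
    exact le_trans (Finset.card_le_card h1) (hP x hxP).1
  have hDomIi : Dom x = pc.I i \ M := by
    rw [hM, Finset.sdiff_sdiff_self_left, Finset.inter_eq_right.mpr hDom]
  have e1 : J' \ Dom x = J' ∩ M := by
    ext r
    simp only [Finset.mem_sdiff, Finset.mem_inter, hM]
    constructor
    · rintro ⟨h1, h2⟩; exact ⟨h1, hJ'sub h1, h2⟩
    · rintro ⟨h1, _, h3⟩; exact ⟨h1, h3⟩
  have e2 : Dom x \ J' = (pc.I i \ J') \ M := by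
    ext r
    simp only [Finset.mem_sdiff, hM]
    constructor
    · rintro ⟨h1, h2⟩
      exact ⟨⟨hDom h1, h2⟩, fun hc => hc.2 h1⟩
    · rintro ⟨⟨h1, h2⟩, h3⟩
      refine ⟨?_, h2⟩
      by_contra h
      exact h3 ⟨h1, h⟩
  have hcards : (J' ∩ M).card ≤ ((pc.I i \ J') \ M).card := by
    have hdisjLM : Disjoint (J' ∩ M) ((pc.I i \ J') ∩ M) := by
      apply Finset.disjoint_left.mpr
      intro r h1 h2
      exact (Finset.mem_sdiff.mp (Finset.mem_inter.mp h2).1).2 (Finset.mem_inter.mp h1).1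
    have hsubM : (J' ∩ M) ∪ ((pc.I i \ J') ∩ M) ⊆ M := by
      intro r hr
      rcases Finset.mem_union.mp hr with h | h
      · exact (Finset.mem_inter.mp h).2
      · exact (Finset.mem_inter.mp h).2
    have c1 : (J' ∩ M).card + ((pc.I i \ J') ∩ M).card ≤ M.card := by
      rw [← Finset.card_union_of_disjoint hdisjLM]
      exact Finset.card_le_card hsubM
    have c2 : ((pc.I i \ J') \ M).card + ((pc.I i \ J') ∩ M).card = (pc.I i \ J').card :=
      Finset.card_sdiff_add_card_inter _ _
    omega
  have hsum : ∑ r ∈ J', w r ≤ ∑ r ∈ Dom x, w r := by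
    have d1 : ∑ r ∈ J', w r = ∑ r ∈ J' \ Dom x, w r + ∑ r ∈ J' ∩ Dom x, w r := by
      rw [← Finset.sum_sdiff (Finset.inter_subset_left (s₂ := Dom x)),
        Finset.sdiff_inter_self_left]
    have d2 : ∑ r ∈ Dom x, w r = ∑ r ∈ Dom x \ J', w r + ∑ r ∈ Dom x ∩ J', w r := by
      rw [← Finset.sum_sdiff (Finset.inter_subset_left (s₂ := J')),
        Finset.sdiff_inter_self_left]
    have d3 : ∑ r ∈ J' ∩ Dom x, w r = ∑ r ∈ Dom x ∩ J', w r := by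
      rw [Finset.inter_comm]
    have d4 : ∑ r ∈ J' \ Dom x, w r ≤ ∑ r ∈ Dom x \ J', w r := by
      apply sum_le_sum_of_card_le hwn
      · rw [e1, e2]; exact hcards
      · intro a ha b hb
        have ha' : a ∈ J' := (Finset.mem_sdiff.mp ha).1
        have hb' : b ∈ pc.I i \ J' := by
          have := (e2 ▸ hb)
          exact (Finset.mem_sdiff.mp this).1
        exact hwcomp b hb' a ha'
    linarith
  have h3 : dj ≤ dI (Dom x) (pc.u i) cj := by
    have : dj = Real.sqrt (∑ r ∈ J', w r) := by
      rw [hdj]; rfl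
    rw [this]
    exact Real.sqrt_le_sqrt hsum
  -- triangle inequality on Dom x
  set f : Fin d → ℝ := fun r =>
    if cj r = none then 0 else (pc.u i r).getD 0 - (x r).getD 0 with hf
  set g : Fin d → ℝ := fun r =>
    if cj r = none then 0 else (x r).getD 0 - (cj r).getD 0 with hg
  have htri : dI (Dom x) (pc.u i) cj ≤ dI (Dom x) (pc.u i) x + dI (Dom x) x cj := by
    have key1 : ∀ r ∈ Dom x, coordSq (pc.u i r) (cj r) = (f r + g r) ^ 2 := by
      intro r hr
      obtain ⟨a, hxa⟩ : ∃ a, x r = some a := Option.ne_none_iff_exists'.mp (mem_Dom_iff.mp hr)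
      obtain ⟨b, hub⟩ : ∃ b, pc.u i r = some b :=
        Option.ne_none_iff_exists'.mp (hunone r (hDom hr))
      rw [hf, hg]
      cases hcr : cj r with
      | none => simp [hcr, hub, coordSq_none_right]
      | some c => simp [hcr, hub, hxa, coordSq]
    have key2 : ∀ r ∈ Dom x, f r ^ 2 ≤ coordSq (pc.u i r) (x r) := by
      intro r hr
      obtain ⟨a, hxa⟩ : ∃ a, x r = some a := Option.ne_none_iff_exists'.mp (mem_Dom_iff.mp hr)
      obtain ⟨b, hub⟩ : ∃ b, pc.u i r = some b :=
        Option.ne_none_iff_exists'.mp (hunone r (hDom hr))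
      rw [hf]
      cases hcr : cj r with
      | none => simp [hcr]; exact coordSq_nonneg _ _
      | some c => simp [hcr, hub, hxa, coordSq]
    have key3 : ∀ r ∈ Dom x, g r ^ 2 = coordSq (x r) (cj r) := by
      intro r hr
      obtain ⟨a, hxa⟩ : ∃ a, x r = some a := Option.ne_none_iff_exists'.mp (mem_Dom_iff.mp hr)
      rw [hg]
      cases hcr : cj r with
      | none => simp [hcr, hxa, coordSq_none_right]
      | some c => simp [hcr, hxa, coordSq]
    calc dI (Dom x) (pc.u i) cj = Real.sqrt (∑ r ∈ Dom x, (f r + g r) ^ 2) := by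
          unfold dI; rw [Finset.sum_congr rfl key1]
      _ ≤ Real.sqrt (∑ r ∈ Dom x, f r ^ 2) + Real.sqrt (∑ r ∈ Dom x, g r ^ 2) :=
          sqrt_sum_sq_add _ _ _
      _ ≤ dI (Dom x) (pc.u i) x + dI (Dom x) x cj := by
          apply add_le_add
          · exact Real.sqrt_le_sqrt (Finset.sum_le_sum key2)
          · exact le_of_eq (by unfold dI; rw [Finset.sum_congr rfl key3])
  have h4 : dI (Dom x) (pc.u i) x = dI (Dom x) x (pc.u i) := by
    unfold dI
    congr 1
    exact Finset.sum_congr rfl fun r _ => coordSq_comm _ _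
  have h5 : dI (Dom x) x (pc.u i) ≤ dH x (pc.u i) :=
    dI_mono (Finset.subset_univ _) _ _
  have h6 : dI (Dom x) x cj ≤ dH x cj :=
    dI_mono (Finset.subset_univ _) _ _
  have hfinal : dj ≤ 2 * dH x (pc.u i) := by
    have := h3.trans (htri.trans (by linarith [hle, step1] :
      dI (Dom x) (pc.u i) x + dI (Dom x) x cj ≤ 2 * dH x (pc.u i)))
    exact this
  linarith

end KMD
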